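/- Let K ≥ 1, t_0 > 0, and h_0, …, h_K ∈ ℝ. If f, z : [0,t_0] → ℂ are K-times continuously differentiable and satisfy f^{(k)}(0) = 0 and z^{(k)}(0) = 0 for k = 0, …, K−1, then ∫_0^{t_0} (Σ_{k=0}^K (−1)^k h_k f^{(k)}(t_0−t)) · conj(z(t)) dt = ∫_0^{t_0} f(t) · conj(Σ_{k=0}^K (−1)^k h_k z^{(k)}(t_0−t)) dt. -/

import Mathlib

open MeasureTheory Real Set ComplexConjugate

private lemma iterDW_conj (s : Set ℝ) (hs : UniqueDiffOn ℝ s) (z : ℝ → ℂ) (n : ℕ) :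
    ∀ x ∈ s, iteratedDerivWithin n (fun t => conj (z t)) s x
      = conj (iteratedDerivWithin n z s x) := by
  induction n with
  | zero => intro x hx; simp
  | succ n ih =>
    intro x hx
    rw [iteratedDerivWithin_succ, iteratedDerivWithin_succ]
    have h1 : derivWithin (iteratedDerivWithin n (fun t => conj (z t)) s) s x
        = derivWithin (fun y => conj (iteratedDerivWithin n z s y)) s x :=
      derivWithin_congr (fun y hy => ih y hy) (ih x hx)
    rw [h1]
    exact derivWithin.star

private lemma key_ibp (t₀ : ℝ) (ht₀ : 0 < t₀) (K k : ℕ) (hk : k ≤ K) (u v : ℝ → ℂ)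
    (hu : ContDiffOn ℝ K u (Icc 0 t₀)) (hv : ContDiffOn ℝ K v (Icc 0 t₀))
    (hu0 : ∀ j < K, iteratedDerivWithin j u (Icc 0 t₀) 0 = 0)
    (hv0 : ∀ j < K, iteratedDerivWithin j v (Icc 0 t₀) 0 = 0) :
    ∫ t in (0:ℝ)..t₀, iteratedDerivWithin k u (Icc 0 t₀) (t₀ - t) * v t
      = ∫ t in (0:ℝ)..t₀, u t * iteratedDerivWithin k v (Icc 0 t₀) (t₀ - t) := by
  set s : Set ℝ := Icc (0:ℝ) t₀ with hsdef
  have hs : UniqueDiffOn ℝ s := uniqueDiffOn_Icc ht₀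
  have huicc : (Set.uIcc (0:ℝ) t₀) = s := uIcc_of_le ht₀.le
  have hmem : ∀ x ∈ s, t₀ - x ∈ s := by
    rintro x ⟨h1, h2⟩; exact ⟨by linarith, by linarith⟩
  have hmapsTo : MapsTo (fun t => t₀ - t) s s := hmem
  have h0s : (0:ℝ) ∈ s := left_mem_Icc.2 ht₀.le
  have ht₀s : t₀ ∈ s := right_mem_Icc.2 ht₀.le
  have hcontsub : ContinuousOn (fun t : ℝ => t₀ - t) s :=
    (continuous_const.sub continuous_id).continuousOn
  -- continuity of iterated derivatives
  have hcu : ∀ m : ℕ, m ≤ K → ContinuousOn (iteratedDerivWithin m u s) s := fun m hm =>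
    hu.continuousOn_iteratedDerivWithin (by exact_mod_cast hm) hs
  have hcv : ∀ m : ℕ, m ≤ K → ContinuousOn (iteratedDerivWithin m v s) s := fun m hm =>
    hv.continuousOn_iteratedDerivWithin (by exact_mod_cast hm) hs
  have hintu : ∀ m j : ℕ, m ≤ K → j ≤ K →
      IntervalIntegrable (fun t => iteratedDerivWithin m u s (t₀ - t)
        * iteratedDerivWithin j v s t) volume 0 t₀ := by
    intro m j hm hj
    apply ContinuousOn.intervalIntegrable
    rw [huicc]
    exact (((hcu m hm).comp hcontsub hmapsTo).mul (hcv j hj))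
  -- derivative facts
  have hDv : ∀ j : ℕ, j < K → ∀ x ∈ s,
      HasDerivWithinAt (iteratedDerivWithin j v s)
        (iteratedDerivWithin (j+1) v s x) s x := by
    intro j hj x hx
    have hd := (hv.differentiableOn_iteratedDerivWithin (by exact_mod_cast hj) hs) x hx
    have := hd.hasDerivWithinAt
    rwa [← iteratedDerivWithin_succ] at this
  have hDu : ∀ m : ℕ, m < K → ∀ x ∈ s,
      HasDerivWithinAt (fun t => -(iteratedDerivWithin m u s (t₀ - t)))
        (iteratedDerivWithin (m+1) u s (t₀ - x)) s x := by
    intro m hm x hx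
    have houter : HasDerivWithinAt (iteratedDerivWithin m u s)
        (iteratedDerivWithin (m+1) u s (t₀ - x)) s (t₀ - x) := by
      have hd := (hu.differentiableOn_iteratedDerivWithin (by exact_mod_cast hm) hs)
        (t₀ - x) (hmem x hx)
      have := hd.hasDerivWithinAt
      rwa [← iteratedDerivWithin_succ] at this
    have hinner : HasDerivWithinAt (fun t : ℝ => t₀ - t) (-1 : ℝ) s x :=
      ((hasDerivAt_id x).const_sub t₀).hasDerivWithinAt
    have hcomp := HasDerivWithinAt.scomp x houter hinner hmapsTo
    have := hcomp.neg
    simp only [neg_smul, one_smul, neg_neg] at this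
    exact this
  -- main induction
  have main : ∀ j : ℕ, j ≤ k →
      (∫ t in (0:ℝ)..t₀, iteratedDerivWithin k u s (t₀ - t) * v t)
        = ∫ t in (0:ℝ)..t₀, iteratedDerivWithin (k - j) u s (t₀ - t)
            * iteratedDerivWithin j v s t := by
    intro j
    induction j with
    | zero => intro _; simp
    | succ j ih =>
      intro hj
      have hjk : j < k := hj
      have hjK : j < K := lt_of_lt_of_le hjk hk
      rw [ih (le_of_lt hjk)]
      have hkj : k - j = (k - (j+1)) + 1 := by omega
      set m : ℕ := k - (j + 1) with hmdef
      have hmK : m < K := by omega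
      have hU : ∀ x ∈ (Set.uIcc (0:ℝ) t₀),
          HasDerivWithinAt (fun t => -(iteratedDerivWithin m u s (t₀ - t)))
            (iteratedDerivWithin (m+1) u s (t₀ - x)) (Set.uIcc (0:ℝ) t₀) x := by
        rw [huicc]; exact hDu m hmK
      have hV : ∀ x ∈ (Set.uIcc (0:ℝ) t₀),
          HasDerivWithinAt (iteratedDerivWithin j v s)
            (iteratedDerivWithin (j+1) v s x) (Set.uIcc (0:ℝ) t₀) x := by
        rw [huicc]; exact hDv j hjK
      have hU' : IntervalIntegrable
          (fun x => iteratedDerivWithin (m+1) u s (t₀ - x)) volume 0 t₀ := by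
        apply ContinuousOn.intervalIntegrable
        rw [huicc]
        exact (hcu (m+1) (by omega)).comp hcontsub hmapsTo
      have hV' : IntervalIntegrable
          (fun x => iteratedDerivWithin (j+1) v s x) volume 0 t₀ := by
        apply ContinuousOn.intervalIntegrable
        rw [huicc]; exact hcv (j+1) (by omega)
      have hibp := intervalIntegral.integral_mul_deriv_eq_deriv_mul_of_hasDerivWithinAt
        hU hV hU' hV'
      have hu0' : iteratedDerivWithin m u s 0 = 0 := hu0 m hmK
      have hb2 : iteratedDerivWithin j v s 0 = 0 := hv0 j hjK
      simp only [sub_self, hu0', hb2, neg_zero, zero_mul, mul_zero, sub_zero, zero_sub]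
        at hibp
      have h2 : (∫ x in (0:ℝ)..t₀, -(iteratedDerivWithin m u s (t₀ - x))
            * iteratedDerivWithin (j+1) v s x)
          = -∫ x in (0:ℝ)..t₀, iteratedDerivWithin m u s (t₀ - x)
            * iteratedDerivWithin (j+1) v s x := by
        rw [← intervalIntegral.integral_neg]
        simp [neg_mul]
      rw [h2] at hibp
      rw [hkj]
      linear_combination hibp
  have hfin := main k le_rfl
  rw [hfin]
  simp only [Nat.sub_self, iteratedDerivWithin_zero]
  have hsub := intervalIntegral.integral_comp_sub_left
    (fun x => u x * iteratedDerivWithin k v s (t₀ - x)) t₀ (a := 0) (b := t₀)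
  simp only [sub_self, sub_zero] at hsub
  rw [← hsub]
  congr 1
  ext t
  simp [sub_sub_cancel]

/-- Symmetry of the operator `(Hf)(t) = ∑_{k=0}^K (−1)^k h_k f^{(k)}(t₀−t)` on `[0,t₀]`
under the boundary conditions `f^{(k)}(0) = 0`, `0 ≤ k ≤ K−1` (corresponding to the Hankel
operator with kernel `h(t) = ∑_k h_k δ^{(k)}(t−t₀)`). -/
theorem delta_kernel_hankel_symmetric
    (K : ℕ) (hK : 1 ≤ K) (t₀ : ℝ) (ht₀ : 0 < t₀) (h : ℕ → ℝ)
    (f z : ℝ → ℂ)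
    (hf : ContDiffOn ℝ K f (Icc 0 t₀)) (hz : ContDiffOn ℝ K z (Icc 0 t₀))
    (hf0 : ∀ k < K, iteratedDerivWithin k f (Icc 0 t₀) 0 = 0)
    (hz0 : ∀ k < K, iteratedDerivWithin k z (Icc 0 t₀) 0 = 0) :
    ∫ t in (0 : ℝ)..t₀,
        (∑ k ∈ Finset.range (K + 1),
            (-1 : ℂ) ^ k * (h k : ℂ) * iteratedDerivWithin k f (Icc 0 t₀) (t₀ - t))
          * conj (z t)
      = ∫ t in (0 : ℝ)..t₀,
          f t * conj (∑ k ∈ Finset.range (K + 1),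
            (-1 : ℂ) ^ k * (h k : ℂ) * iteratedDerivWithin k z (Icc 0 t₀) (t₀ - t)) := by
  set s : Set ℝ := Icc (0:ℝ) t₀ with hsdef
  have hs : UniqueDiffOn ℝ s := uniqueDiffOn_Icc ht₀
  have huicc : Set.uIcc (0:ℝ) t₀ = s := uIcc_of_le ht₀.le
  have h0s : (0:ℝ) ∈ s := left_mem_Icc.2 ht₀.le
  have hmem : ∀ x ∈ s, t₀ - x ∈ s := by
    rintro x ⟨h1, h2⟩; exact ⟨by linarith, by linarith⟩
  have hmapsTo : MapsTo (fun t => t₀ - t) s s := hmem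
  have hcontsub : ContinuousOn (fun t : ℝ => t₀ - t) s :=
    (continuous_const.sub continuous_id).continuousOn
  set c : ℕ → ℂ := fun k => (-1 : ℂ) ^ k * (h k : ℂ) with hcdef
  have hc : ∀ k : ℕ, conj (c k) = c k := by
    intro k
    simp [hcdef, map_mul, map_pow, Complex.conj_ofReal]
  -- conj ∘ z
  have hzc : ContDiffOn ℝ K (fun t => conj (z t)) s := by
    have : ContDiffOn ℝ K (fun t => Complex.conjCLE (z t)) s :=
      Complex.conjCLE.contDiff.comp_contDiffOn hz
    simpa using this
  have hzc0 : ∀ j < K, iteratedDerivWithin j (fun t => conj (z t)) s 0 = 0 := by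
    intro j hj
    rw [iterDW_conj s hs z j 0 h0s, hz0 j hj, map_zero]
  -- per-k identity
  have hkey : ∀ k ∈ Finset.range (K + 1),
      (∫ t in (0:ℝ)..t₀, iteratedDerivWithin k f s (t₀ - t) * conj (z t))
        = ∫ t in (0:ℝ)..t₀, f t * conj (iteratedDerivWithin k z s (t₀ - t)) := by
    intro k hk
    have hkK : k ≤ K := Nat.lt_succ_iff.mp (Finset.mem_range.mp hk)
    have h1 := key_ibp t₀ ht₀ K k hkK f (fun t => conj (z t)) hf hzc hf0 hzc0
    rw [h1]
    apply intervalIntegral.integral_congr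
    intro t ht
    rw [huicc] at ht
    show f t * iteratedDerivWithin k (fun t => conj (z t)) (Icc 0 t₀) (t₀ - t)
      = f t * conj (iteratedDerivWithin k z (Icc 0 t₀) (t₀ - t))
    rw [iterDW_conj (Icc 0 t₀) hs z k (t₀ - t) (hmem t ht)]
  -- continuity / integrability of the terms
  have hcf : ∀ k ≤ K, ContinuousOn (iteratedDerivWithin k f s) s := fun k hk =>
    hf.continuousOn_iteratedDerivWithin (by exact_mod_cast hk) hs
  have hcz : ∀ k ≤ K, ContinuousOn (iteratedDerivWithin k z s) s := fun k hk =>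
    hz.continuousOn_iteratedDerivWithin (by exact_mod_cast hk) hs
  have hzcont : ContinuousOn (fun t => conj (z t)) s :=
    Complex.continuous_conj.comp_continuousOn hz.continuousOn
  have hfcont : ContinuousOn f s := hf.continuousOn
  have hintL : ∀ k ∈ Finset.range (K + 1), IntervalIntegrable
      (fun t => c k * (iteratedDerivWithin k f s (t₀ - t) * conj (z t))) volume 0 t₀ := by
    intro k hk
    have hkK : k ≤ K := Nat.lt_succ_iff.mp (Finset.mem_range.mp hk)
    apply ContinuousOn.intervalIntegrable
    rw [huicc]
    exact (continuousOn_const.mul (((hcf k hkK).comp hcontsub hmapsTo).mul hzcont))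
  have hintR : ∀ k ∈ Finset.range (K + 1), IntervalIntegrable
      (fun t => c k * (f t * conj (iteratedDerivWithin k z s (t₀ - t)))) volume 0 t₀ := by
    intro k hk
    have hkK : k ≤ K := Nat.lt_succ_iff.mp (Finset.mem_range.mp hk)
    apply ContinuousOn.intervalIntegrable
    rw [huicc]
    exact continuousOn_const.mul (hfcont.mul
      (Complex.continuous_conj.comp_continuousOn ((hcz k hkK).comp hcontsub hmapsTo)))
  -- rewrite both sides as sums
  have hL : (∫ t in (0:ℝ)..t₀,
        (∑ k ∈ Finset.range (K + 1), c k * iteratedDerivWithin k f s (t₀ - t)) * conj (z t))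
      = ∑ k ∈ Finset.range (K + 1),
          c k * ∫ t in (0:ℝ)..t₀, iteratedDerivWithin k f s (t₀ - t) * conj (z t) := by
    have heq : (fun t => (∑ k ∈ Finset.range (K + 1),
          c k * iteratedDerivWithin k f s (t₀ - t)) * conj (z t))
        = fun t => ∑ k ∈ Finset.range (K + 1),
            c k * (iteratedDerivWithin k f s (t₀ - t) * conj (z t)) := by
      funext t
      rw [Finset.sum_mul]
      exact Finset.sum_congr rfl fun k _ => mul_assoc _ _ _
    rw [heq, intervalIntegral.integral_finset_sum hintL]
    exact Finset.sum_congr rfl fun k _ => intervalIntegral.integral_const_mul _ _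
  have hR : (∫ t in (0:ℝ)..t₀,
        f t * conj (∑ k ∈ Finset.range (K + 1), c k * iteratedDerivWithin k z s (t₀ - t)))
      = ∑ k ∈ Finset.range (K + 1),
          c k * ∫ t in (0:ℝ)..t₀, f t * conj (iteratedDerivWithin k z s (t₀ - t)) := by
    have heq : (fun t => f t * conj (∑ k ∈ Finset.range (K + 1),
          c k * iteratedDerivWithin k z s (t₀ - t)))
        = fun t => ∑ k ∈ Finset.range (K + 1),
            c k * (f t * conj (iteratedDerivWithin k z s (t₀ - t))) := by
      funext t
      rw [map_sum, Finset.mul_sum]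
      refine Finset.sum_congr rfl fun k _ => ?_
      rw [map_mul, hc]
      ring
    rw [heq, intervalIntegral.integral_finset_sum hintR]
    exact Finset.sum_congr rfl fun k _ => intervalIntegral.integral_const_mul _ _
  rw [hL, hR]
  exact Finset.sum_congr rfl fun k hk => by rw [hkey k hk]
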